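/- Let G be a locally compact quantum group and X ⊆ M^l_{cb}(A(G)) a convex subset. If there exists a net (a_i) in X converging to 1 in the weak* topology of M^l_{cb}(A(G)), then there exists a net (b_j) in X such that (Θˡ(b_j) ⊗ id)(x) → x in norm for every x ∈ C₀(Ĝ) ⊗ K(H) and every Hilbert space H. -/

import Mathlib

open Filter

universe u v

structure MazurTask (Mcb : Type u) [NormedAddCommGroup Mcb] [NormedSpace ℂ Mcb]
    (Q : Set (Mcb →L[ℂ] ℂ)) (one : Mcb) : Type (max u (v + 1)) where
  T : Type v
  inst1 : NormedAddCommGroup T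
  inst2 : NormedSpace ℂ T
  amp : Mcb →ₗ[ℂ] (T →L[ℂ] T)
  x : T
  hone : amp one x = x
  hQ : ∀ μ : T →L[ℂ] ℂ, ∃ q ∈ Q, ∀ a, q a = μ (amp a x)

attribute [instance] MazurTask.inst1 MazurTask.inst2

lemma mazur_key {Mcb : Type u} [NormedAddCommGroup Mcb] [NormedSpace ℂ Mcb]
    {Q : Set (Mcb →L[ℂ] ℂ)} {one : Mcb} {X : Set Mcb} (hX : Convex ℝ X)
    (hnet : ∃ (ιt : Type u) (l : Filter ιt) (a : ιt → Mcb), l.NeBot ∧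
      (∀ i, a i ∈ X) ∧
      ∀ q ∈ Q, Tendsto (fun i => q (a i)) l (nhds (q one)))
    (F : Finset (MazurTask.{u, v} Mcb Q one)) {ε : ℝ} (hε : 0 < ε) :
    ∃ b ∈ X, ∀ t ∈ F, ‖t.amp b t.x - t.x‖ < ε := by
  classical
  obtain ⟨ιt, l, a, hl, haX, hq⟩ := hnet
  -- the finite product space
  let P := ∀ t : F, t.1.T
  -- the real-linear "joint amplification" map
  let L : Mcb →ₗ[ℝ] P :=
    { toFun := fun b => fun t => t.1.amp b t.1.x
      map_add' := by
        intro b c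
        funext t
        show (t.1.amp (b + c)) t.1.x = t.1.amp b t.1.x + t.1.amp c t.1.x
        rw [map_add]; rfl
      map_smul' := by
        intro r b
        funext t
        show (t.1.amp ((r : ℂ) • b)) t.1.x = (r : ℂ) • (t.1.amp b t.1.x)
        rw [map_smul]; rfl }
  let S : Set P := L '' X
  let y : P := fun t => t.1.x
  have hy : y ∈ closure S := by
    by_contra hy
    obtain ⟨f, u, hfu, huy⟩ :=
      RCLike.geometric_hahn_banach_closed_point (𝕜 := ℂ)
        ((hX.linear_image L).closure) isClosed_closure hy
    -- coordinate functionals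
    have hqex : ∀ t : F, ∃ q ∈ Q, ∀ a,
        q a = f (Pi.single t (t.1.amp a t.1.x)) := by
      intro t
      have cont : Continuous fun z : t.1.T => (Pi.single t z : P) := continuous_single (A := fun t : F => (t : MazurTask.{u, v} Mcb Q one).T) t
      let sing : t.1.T →L[ℂ] P := ⟨LinearMap.single ℂ (fun t : F => t.1.T) t, cont⟩
      obtain ⟨q, hqQ, hqa⟩ := t.1.hQ (f.comp sing)
      exact ⟨q, hqQ, fun a => hqa a⟩
    choose q hqQ hqa using hqex
    -- decomposition of f over coordinates
    have hdec : ∀ z : P, f z = ∑ t : F, f (Pi.single t (z t)) := by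
      intro z
      conv_lhs => rw [show z = ∑ t : F, Pi.single t (z t) by
        funext i
        rw [Finset.sum_apply]
        exact (Fintype.sum_pi_single i z).symm]
      exact map_sum f _ _
    have hfL : ∀ c : Mcb, f (L c) = ∑ t : F, q t c := by
      intro c
      rw [hdec]
      exact Finset.sum_congr rfl fun t _ => (hqa t c).symm
    have hfy : f y = ∑ t : F, q t one := by
      rw [hdec]
      refine Finset.sum_congr rfl fun t _ => ?_
      rw [hqa t one, t.1.hone]
    -- weak convergence
    have htd : Tendsto (fun i => Complex.re (f (L (a i)))) l (nhds (Complex.re (f y))) := by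
      simp only [hfL, hfy, Complex.re_sum]
      exact tendsto_finset_sum _ fun t _ =>
        (Complex.continuous_re.tendsto _).comp (hq (q t) (hqQ t))
    have hlt : ∀ i, Complex.re (f (L (a i))) < u := fun i =>
      hfu _ (subset_closure ⟨a i, haX i, rfl⟩)
    have : Complex.re (f y) ≤ u := le_of_tendsto htd (Eventually.of_forall fun i => (hlt i).le)
    exact absurd huy (not_lt.2 this)
  obtain ⟨s, ⟨b, hbX, rfl⟩, hd⟩ := Metric.mem_closure_iff.1 hy ε hε
  refine ⟨b, hbX, fun t ht => ?_⟩
  have := dist_le_pi_dist (L b) y ⟨t, ht⟩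
  calc ‖t.amp b t.x - t.x‖ = dist (L b ⟨t, ht⟩) (y ⟨t, ht⟩) := by
        rw [dist_eq_norm]; rfl
    _ ≤ dist (L b) y := dist_le_pi_dist _ _ _
    _ < ε := by rwa [dist_comm] at hd

/-- Let `G` be a locally compact quantum group and
`X ⊆ M^l_{cb}(A(G))` a convex subset.  If there is a net `(a_i)` in `X` converging to the
unit multiplier `1` in the weak* topology of `M^l_{cb}(A(G))` (i.e. pointwise against every
element of the predual `Q = Qˡ(A(G)) ⊆ M^l_{cb}(A(G))*`), then there is a net `(b_j)` in
`X` such that `(Θˡ(b_j) ⊗ id)(x) → x` in norm for every `x ∈ C₀(Ĝ) ⊗ K(H)` and every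
Hilbert space `H`.  Here the spaces `C₀(Ĝ) ⊗ K(H)` are abstracted as the Banach spaces `T`
equipped with an amplification `amp : a ↦ Θˡ(a) ⊗ id` such that every slice functional
`a ↦ ⟨μ, (Θˡ(a) ⊗ id)(x)⟩` belongs to `Q` (Statement 16). -/
theorem weak_star_approx_implies_norm_approx_on_amplifications
    {Mcb : Type u} [NormedAddCommGroup Mcb] [NormedSpace ℂ Mcb]
    (Q : Set (Mcb →L[ℂ] ℂ))
    (one : Mcb)
    (X : Set Mcb) (hX : Convex ℝ X)
    (hnet : ∃ (ιt : Type u) (l : Filter ιt) (a : ιt → Mcb), l.NeBot ∧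
      (∀ i, a i ∈ X) ∧
      ∀ q ∈ Q, Tendsto (fun i => q (a i)) l (nhds (q one))) :
    ∃ (κ : Type (max u (v + 1))) (m : Filter κ) (b : κ → Mcb), m.NeBot ∧
      (∀ j, b j ∈ X) ∧
      ∀ (T : Type v) [NormedAddCommGroup T] [NormedSpace ℂ T]
        (amp : Mcb →ₗ[ℂ] (T →L[ℂ] T)),
        (∀ a, ‖amp a‖ ≤ ‖a‖) →
        amp one = ContinuousLinearMap.id ℂ T →
        (∀ (x : T) (μ : T →L[ℂ] ℂ), ∃ q ∈ Q, ∀ a, q a = μ ((amp a) x)) →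
        ∀ x : T, Tendsto (fun j => amp (b j) x) m (nhds x) := by
  classical
  have hpos : ∀ n : ℕ, (0 : ℝ) < 1 / (n + 1) := fun n => by positivity
  refine ⟨Finset (MazurTask.{u, v} Mcb Q one) × ℕ, atTop,
    fun p => (mazur_key hX hnet p.1 (hpos p.2)).choose, atTop_neBot,
    fun p => (mazur_key hX hnet p.1 (hpos p.2)).choose_spec.1, ?_⟩
  intro T _ _ amp hnorm hone hQ x
  set t : MazurTask.{u, v} Mcb Q one :=
    ⟨T, ‹_›, ‹_›, amp, x, by rw [hone]; rfl, fun μ => hQ x μ⟩ with ht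
  rw [Metric.tendsto_nhds]
  intro ε hε
  obtain ⟨N, hN⟩ := exists_nat_one_div_lt hε
  filter_upwards [eventually_ge_atTop (({t}, N) : Finset (MazurTask.{u, v} Mcb Q one) × ℕ)]
    with p hp
  have ht1 : t ∈ p.1 := Finset.singleton_subset_iff.1 hp.1
  have h2 := (mazur_key hX hnet p.1 (hpos p.2)).choose_spec.2 t ht1
  rw [dist_eq_norm]
  calc ‖amp ((mazur_key hX hnet p.1 (hpos p.2)).choose) x - x‖ < 1 / (p.2 + 1) := h2
    _ ≤ 1 / (N + 1) := by
        apply one_div_le_one_div_of_le (by positivity)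
        exact_mod_cast Nat.succ_le_succ hp.2
    _ < ε := hN
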